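/- Let g = \u03a3_{i\u2265N} x_i t^i \u2208 SL_n(\u2102((t))) with g \u2208 SL_n(\u2102[[t]]) t^\u03bb SL_n(\u2102[[t]]) for \u03bb = (a_1 \u2265 ... \u2265 a_n), \u03a3 a_i = 0. Then for any s \u2265 1, the rank of the block upper-triangular ns \u00d7 ns matrix with (i,j)-block x_{N+j-i} for j \u2265 i (and 0 below) equals \u03a3_{j=1}^n max{s - (a_j - a_n), 0}, where N = a_n. -/

import Mathlib

open Matrix

noncomputable def truncT (s n : ℕ) (M : Matrix (Fin n) (Fin n) (PowerSeries ℂ)) :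
    Matrix (Fin s × Fin n) (Fin s × Fin n) ℂ :=
  Matrix.of fun p q =>
    if (p.1 : ℕ) ≤ (q.1 : ℕ) then PowerSeries.coeff ((q.1 : ℕ) - (p.1 : ℕ)) (M p.2 q.2) else 0

lemma truncT_apply (s n : ℕ) (M : Matrix (Fin n) (Fin n) (PowerSeries ℂ))
    (p q : Fin s × Fin n) :
    truncT s n M p q =
      if (p.1 : ℕ) ≤ (q.1 : ℕ) then PowerSeries.coeff ((q.1 : ℕ) - (p.1 : ℕ)) (M p.2 q.2)
      else 0 := rfl

lemma truncT_one (s n : ℕ) : truncT s n 1 = 1 := by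
  ext ⟨p, k⟩ ⟨q, l⟩
  simp only [truncT_apply, Matrix.one_apply, Prod.mk.injEq]
  by_cases hkl : k = l
  · subst hkl
    simp only [if_pos rfl, and_true, PowerSeries.coeff_one]
    split_ifs <;> simp_all [Fin.ext_iff] <;> omega
  · simp [hkl]

lemma sum_fin_interval {s : ℕ} (p q : Fin s) (F : ℕ → ℂ) :
    (∑ r : Fin s, if (p : ℕ) ≤ (r : ℕ) ∧ (r : ℕ) ≤ (q : ℕ) then F (r : ℕ) else 0)
      = ∑ a ∈ Finset.Icc (p : ℕ) (q : ℕ), F a := by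
  rw [Fin.sum_univ_eq_sum_range (fun r => if (p : ℕ) ≤ r ∧ r ≤ (q : ℕ) then F r else 0) s,
    ← Finset.sum_filter]
  apply Finset.sum_congr
  · ext a
    simp only [Finset.mem_filter, Finset.mem_range, Finset.mem_Icc]
    constructor
    · rintro ⟨_, h2, h3⟩; exact ⟨h2, h3⟩
    · rintro ⟨h2, h3⟩; exact ⟨lt_of_le_of_lt h3 q.isLt, h2, h3⟩
  · intros; rfl

lemma truncT_mul (s n : ℕ) (M M' : Matrix (Fin n) (Fin n) (PowerSeries ℂ)) :
    truncT s n (M * M') = truncT s n M * truncT s n M' := by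
  ext ⟨p, k⟩ ⟨q, l⟩
  rw [Matrix.mul_apply]
  simp only [truncT_apply]
  have hterm : ∀ rj : Fin s × Fin n,
      ((if (p : ℕ) ≤ (rj.1 : ℕ) then
          PowerSeries.coeff ((rj.1 : ℕ) - (p : ℕ)) (M k rj.2) else 0) *
        (if (rj.1 : ℕ) ≤ (q : ℕ) then
          PowerSeries.coeff ((q : ℕ) - (rj.1 : ℕ)) (M' rj.2 l) else 0)) =
      (if (p : ℕ) ≤ (rj.1 : ℕ) ∧ (rj.1 : ℕ) ≤ (q : ℕ) then
        PowerSeries.coeff ((rj.1 : ℕ) - (p : ℕ)) (M k rj.2) *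
          PowerSeries.coeff ((q : ℕ) - (rj.1 : ℕ)) (M' rj.2 l) else 0) := by
    intro rj
    split_ifs with h1 h2 h3 h4 h5 <;> simp_all
  rw [Finset.sum_congr rfl (fun rj _ => hterm rj)]
  rw [Fintype.sum_prod_type]
  by_cases hpq : (p : ℕ) ≤ (q : ℕ)
  · rw [if_pos hpq, Matrix.mul_apply, map_sum, Finset.sum_comm]
    apply Finset.sum_congr rfl
    intro j _
    rw [PowerSeries.coeff_mul, Finset.Nat.sum_antidiagonal_eq_sum_range_succ
      (fun a b => PowerSeries.coeff a (M k j) * PowerSeries.coeff b (M' j l))]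
    rw [sum_fin_interval p q
      (fun r => PowerSeries.coeff (r - (p : ℕ)) (M k j) *
        PowerSeries.coeff ((q : ℕ) - r) (M' j l))]
    rw [← Finset.Ico_add_one_right_eq_Icc, Finset.sum_Ico_eq_sum_range]
    apply Finset.sum_congr
    · congr 1; omega
    · intro i hi
      rw [Finset.mem_range] at hi
      have h1 : (p : ℕ) + i - (p : ℕ) = i := by omega
      have h2 : (q : ℕ) - ((p : ℕ) + i) = (q : ℕ) - (p : ℕ) - i := by omega
      rw [h1, h2]
  · rw [if_neg hpq]
    symm
    apply Finset.sum_eq_zero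
    intro r _
    apply Finset.sum_eq_zero
    intro j _
    rw [if_neg]
    omega

lemma coeff_ofPowerSeries_neg (f : PowerSeries ℂ) (i : ℤ) (hi : i < 0) :
    (HahnSeries.ofPowerSeries ℤ ℂ f).coeff i = 0 := by
  rw [HahnSeries.ofPowerSeries_apply]
  apply HahnSeries.embDomain_notin_range
  rintro ⟨m, hm⟩
  simp at hm
  omega

lemma exists_ps {n : ℕ} (A : Matrix (Fin n) (Fin n) (LaurentSeries ℂ))
    (h : ∀ k l : Fin n, ∀ i < (0 : ℤ), (A k l).coeff i = 0) :
    ∃ Ap : Matrix (Fin n) (Fin n) (PowerSeries ℂ),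
      Ap.map (HahnSeries.ofPowerSeries ℤ ℂ) = A := by
  refine ⟨Matrix.of fun k l => PowerSeries.mk fun m => (A k l).coeff (m : ℤ), ?_⟩
  apply Matrix.ext
  intro k l
  simp only [Matrix.map_apply, Matrix.of_apply]
  ext i
  rcases lt_or_ge i 0 with hi | hi
  · rw [coeff_ofPowerSeries_neg _ _ hi, h k l i hi]
  · lift i to ℕ using hi
    rw [HahnSeries.ofPowerSeries_apply_coeff]
    simp

lemma factor_lemma {n : ℕ} (A B : Matrix (Fin n) (Fin n) (LaurentSeries ℂ))
    (Ap Bp : Matrix (Fin n) (Fin n) (PowerSeries ℂ))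
    (hAp : Ap.map (HahnSeries.ofPowerSeries ℤ ℂ) = A)
    (hBp : Bp.map (HahnSeries.ofPowerSeries ℤ ℂ) = B)
    (lam : Fin n → ℤ) (M' : ℤ) (c : Fin n → ℕ) (hc : ∀ j, lam j = M' + c j) :
    A * Matrix.diagonal (fun j => (HahnSeries.single (lam j) (1 : ℂ))) * B =
      Matrix.diagonal (fun _ : Fin n => HahnSeries.single M' (1 : ℂ)) *
        ((Ap * Matrix.diagonal (fun j => (PowerSeries.X : PowerSeries ℂ) ^ c j) * Bp).map
          (HahnSeries.ofPowerSeries ℤ ℂ)) := by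
  rw [Matrix.map_mul, Matrix.map_mul, hAp, hBp]
  rw [Matrix.diagonal_map (map_zero _)]
  simp only [HahnSeries.ofPowerSeries_X_pow]
  have hcomm : Matrix.diagonal (fun _ : Fin n => HahnSeries.single M' (1 : ℂ)) * A =
      A * Matrix.diagonal (fun _ : Fin n => HahnSeries.single M' (1 : ℂ)) := by
    ext i j
    rw [Matrix.diagonal_mul, Matrix.mul_diagonal, mul_comm]
  rw [← Matrix.mul_assoc, ← Matrix.mul_assoc, hcomm,
    Matrix.mul_assoc A (Matrix.diagonal fun _ : Fin n => HahnSeries.single M' (1 : ℂ))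
      (Matrix.diagonal fun m : Fin n => (HahnSeries.single ((c m : ℤ)) (1 : ℂ))),
    Matrix.diagonal_mul_diagonal]
  have hfun : (fun i : Fin n => HahnSeries.single M' (1 : ℂ) *
      HahnSeries.single ((c i : ℤ)) (1 : ℂ)) =
      fun j => HahnSeries.single (lam j) (1 : ℂ) := by
    funext j
    rw [HahnSeries.single_mul_single, one_mul, ← hc j]
  rw [hfun]

lemma pi_single_inj (ι : Type*) [DecidableEq ι] :
    Function.Injective (fun i : ι => Pi.single i (1 : ℂ)) := by
  intro i j h
  by_contra hij
  have h2 := congrFun h i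
  beta_reduce at h2
  rw [Pi.single_eq_same, Pi.single_eq_of_ne hij] at h2
  exact one_ne_zero h2

lemma rank_truncT_diag (s n : ℕ) (c : Fin n → ℕ) :
    (truncT s n (Matrix.diagonal fun j => (PowerSeries.X : PowerSeries ℂ) ^ c j)).rank
      = ∑ j : Fin n, (s - c j) := by
  classical
  set D := truncT s n (Matrix.diagonal fun j => (PowerSeries.X : PowerSeries ℂ) ^ c j) with hD
  set e : Fin s × Fin n → (Fin s × Fin n → ℂ) := fun i => Pi.single i 1 with he
  set T : Set (Fin s × Fin n) := {pl | (pl.1 : ℕ) + c pl.2 < s} with hT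
  -- column formula
  have hcol : ∀ q : Fin s × Fin n, Dᵀ q =
      if h : c q.2 ≤ (q.1 : ℕ) then e (⟨(q.1 : ℕ) - c q.2, by omega⟩, q.2) else 0 := by
    rintro ⟨q1, l⟩
    funext ⟨p1, k⟩
    have hq1 : (q1 : ℕ) < s := q1.isLt
    have hp1 : (p1 : ℕ) < s := p1.isLt
    rw [Matrix.transpose_apply, hD, truncT_apply]
    by_cases hkl : k = l
    · subst hkl
      simp only [Matrix.diagonal_apply_eq, PowerSeries.coeff_X_pow]
      by_cases hcq : c k ≤ (q1 : ℕ)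
      · rw [dif_pos hcq, he]
        beta_reduce
        have hmk : ((⟨(q1 : ℕ) - c k, by omega⟩ : Fin s) : ℕ) = (q1 : ℕ) - c k := rfl
        by_cases hP : (p1 : ℕ) = (q1 : ℕ) - c k
        · have h1 : (p1 : ℕ) ≤ (q1 : ℕ) := by omega
          have h2 : (q1 : ℕ) - (p1 : ℕ) = c k := by omega
          rw [if_pos h1, if_pos h2, Pi.single_apply, if_pos]
          exact Prod.ext_iff.mpr ⟨Fin.ext (by rw [hmk, hP]), rfl⟩
        · have hne : ¬((p1, k) = ((⟨(q1 : ℕ) - c k, by omega⟩ : Fin s), k)) := by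
            intro hh
            apply hP
            have := congrArg Prod.fst hh
            simpa [Fin.ext_iff] using this
          rw [Pi.single_apply, if_neg hne]
          by_cases h1 : (p1 : ℕ) ≤ (q1 : ℕ)
          · rw [if_pos h1, if_neg (show ¬((q1 : ℕ) - (p1 : ℕ) = c k) by omega)]
          · rw [if_neg h1]
      · rw [dif_neg hcq, Pi.zero_apply]
        by_cases h1 : (p1 : ℕ) ≤ (q1 : ℕ)
        · rw [if_pos h1, if_neg (by omega)]
        · rw [if_neg h1]
    · simp only [Matrix.diagonal_apply_ne _ hkl, map_zero, ite_self]
      split_ifs with h1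
      · rw [he]
        simp only [Pi.single_apply, Prod.mk.injEq]
        rw [if_neg (fun hh => hkl hh.2)]
      · rfl
  -- span equality
  have hspan : Submodule.span ℂ (Set.range Dᵀ) = Submodule.span ℂ (e '' T) := by
    apply le_antisymm
    · rw [Submodule.span_le]
      rintro y ⟨q, rfl⟩
      rw [hcol q]
      split_ifs with h
      · apply Submodule.subset_span
        exact ⟨(⟨(q.1 : ℕ) - c q.2, by omega⟩, q.2), by simp [hT]; omega, rfl⟩
      · exact Submodule.zero_mem _
    · rw [Submodule.span_le]
      rintro y ⟨⟨p0, l⟩, hmem, rfl⟩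
      apply Submodule.subset_span
      rw [hT] at hmem
      simp only [Set.mem_setOf_eq] at hmem
      refine ⟨(⟨(p0 : ℕ) + c l, hmem⟩, l), ?_⟩
      rw [hcol]
      rw [dif_pos (by simp : c l ≤ ((p0 : ℕ) + c l))]
      congr 1
      simp [Fin.ext_iff]
  -- linear independence of the image
  have hli0 : LinearIndependent ℂ e := by
    have := (Pi.basisFun ℂ (Fin s × Fin n)).linearIndependent
    convert this using 1
    funext i
    rw [he, Pi.basisFun_apply]
  have hli : LinearIndependent ℂ ((↑) : (e '' T) → (Fin s × Fin n → ℂ)) := by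
    refine (linearIndepOn_iff_image ((pi_single_inj _).injOn)).mp ?_
    exact hli0.comp _ Subtype.val_injective
  letI : Fintype (e '' T) := ((T.toFinite.image e).fintype)
  rw [Matrix.rank_eq_finrank_span_cols, show D.col = Dᵀ from rfl, hspan, finrank_span_set_eq_card hli]
  have hcard : (e '' T).toFinset = Finset.image e T.toFinset := by
    ext y; simp
  rw [hcard, Finset.card_image_of_injective _ (pi_single_inj _)]
  -- count
  have : T.toFinset = Finset.univ.filter (fun pl : Fin s × Fin n => (pl.1 : ℕ) + c pl.2 < s) := by
    ext pl; simp [hT]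
  rw [this, Finset.card_filter, Fintype.sum_prod_type_right]
  apply Finset.sum_congr rfl
  intro l _
  rw [Fin.sum_univ_eq_sum_range (fun p => if p + c l < s then (1 : ℕ) else 0) s,
    ← Finset.card_filter]
  have : (Finset.range s).filter (fun a => a + c l < s) = Finset.range (s - c l) := by
    ext a; simp only [Finset.mem_filter, Finset.mem_range]; omega
  rw [this, Finset.card_range]

lemma isUnit_truncT_det (s n : ℕ) (Ap : Matrix (Fin n) (Fin n) (PowerSeries ℂ))
    (hdet : Ap.det = 1) : IsUnit (truncT s n Ap).det := by
  have h1 : truncT s n Ap * truncT s n Ap.adjugate = 1 := by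
    rw [← truncT_mul, Matrix.mul_adjugate, hdet, one_smul, truncT_one]
  have h2 : truncT s n Ap.adjugate * truncT s n Ap = 1 := by
    rw [← truncT_mul, Matrix.adjugate_mul, hdet, one_smul, truncT_one]
  have : IsUnit (truncT s n Ap) := ⟨⟨_, _, h1, h2⟩, rfl⟩
  exact (Matrix.isUnit_iff_isUnit_det _).mp this

/-- Let `g = Σ_{i ≥ N} x_i t^i ∈ SL_n(ℂ((t)))` with `x_N ≠ 0`, and
`g ∈ SL_n(ℂ[[t]]) t^λ SL_n(ℂ[[t]])` for `λ = (a_1 ≥ ... ≥ a_n)`, `Σ a_i = 0` (so that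
`N = a_n`).  Then for any `s ≥ 1`, the rank of the `s × s` block upper-triangular
(block Toeplitz) matrix with `(i,j)`-block `x_{N+j-i}` for `j ≥ i` (and `0` below) equals
`Σ_{j=1}^n max{s - (a_j - a_n), 0}`. -/
theorem stmt11 (n : ℕ) (hn : 0 < n) (N : ℤ)
    (g : Matrix (Fin n) (Fin n) (LaurentSeries ℂ))
    (hdet : g.det = 1)
    (x : ℤ → Matrix (Fin n) (Fin n) ℂ)
    (hx : ∀ (i : ℤ) (k l : Fin n), x i k l = (g k l).coeff i)
    (hlow : ∀ i < N, x i = 0) (hN : x N ≠ 0)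
    (lam : Fin n → ℤ)
    (hdom : ∀ i j : Fin n, i ≤ j → lam j ≤ lam i)
    (hsum : ∑ i, lam i = 0)
    (hmem : ∃ A B : Matrix (Fin n) (Fin n) (LaurentSeries ℂ),
      (∀ k l : Fin n, ∀ i < (0 : ℤ), (A k l).coeff i = 0) ∧ A.det = 1 ∧
      (∀ k l : Fin n, ∀ i < (0 : ℤ), (B k l).coeff i = 0) ∧ B.det = 1 ∧
      g = A * Matrix.diagonal (fun j => (HahnSeries.single (lam j) (1 : ℂ))) * B)
    (s : ℕ) (hs : 1 ≤ s) :
    (Matrix.of fun p q : Fin s × Fin n =>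
        if (p.1 : ℕ) ≤ (q.1 : ℕ) then x (N + ((q.1 : ℕ) - (p.1 : ℕ) : ℕ)) p.2 q.2
        else 0).rank =
      ∑ j : Fin n, ((s : ℤ) - (lam j - lam ⟨n - 1, by omega⟩)).toNat := by
  classical
  obtain ⟨A, B, hA0, hAdet, hB0, hBdet, hfac⟩ := hmem
  obtain ⟨Ap, hAp⟩ := exists_ps A hA0
  obtain ⟨Bp, hBp⟩ := exists_ps B hB0
  set nl : Fin n := ⟨n - 1, by omega⟩ with hnl
  have hge : ∀ j : Fin n, lam nl ≤ lam j := by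
    intro j
    apply hdom j nl
    rw [Fin.le_def]
    have := j.isLt
    simp only [hnl]
    omega
  set c : Fin n → ℕ := fun j => (lam j - lam nl).toNat with hc
  have hcspec : ∀ j, lam j = lam nl + (c j : ℤ) := by
    intro j
    have := hge j
    simp only [hc]
    omega
  set h : Matrix (Fin n) (Fin n) (PowerSeries ℂ) :=
    Ap * Matrix.diagonal (fun j => (PowerSeries.X : PowerSeries ℂ) ^ c j) * Bp with hh
  have hgfac : g = Matrix.diagonal (fun _ : Fin n => HahnSeries.single (lam nl) (1 : ℂ)) *
      (h.map (HahnSeries.ofPowerSeries ℤ ℂ)) := by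
    rw [hfac, hh]
    exact factor_lemma A B Ap Bp hAp hBp lam (lam nl) c hcspec
  have hcoeff : ∀ (m : ℤ) (k l : Fin n),
      (g k l).coeff (m + lam nl) = ((HahnSeries.ofPowerSeries ℤ ℂ) (h k l)).coeff m := by
    intro m k l
    rw [hgfac, Matrix.diagonal_mul, HahnSeries.coeff_single_mul_add, one_mul, Matrix.map_apply]
  -- N = lam nl
  have hNge : lam nl ≤ N := by
    by_contra hlt
    push_neg at hlt
    apply hN
    ext k l
    rw [hx N k l]
    have hNc : N - lam nl + lam nl = N := by omega
    have h1 := hcoeff (N - lam nl) k l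
    rw [hNc] at h1
    rw [h1, coeff_ofPowerSeries_neg _ _ (by omega)]
    rfl
  have hdetAp : Ap.det = 1 := by
    apply HahnSeries.ofPowerSeries_injective (Γ := ℤ) (R := ℂ)
    rw [RingHom.map_det, RingHom.mapMatrix_apply, hAp, hAdet, _root_.map_one]
  have hdetBp : Bp.det = 1 := by
    apply HahnSeries.ofPowerSeries_injective (Γ := ℤ) (R := ℂ)
    rw [RingHom.map_det, RingHom.mapMatrix_apply, hBp, hBdet, _root_.map_one]
  have hNle : N ≤ lam nl := by
    by_contra hlt
    push_neg at hlt
    have hx0 : x (lam nl) = 0 := hlow _ hlt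
    have hcc : h.map ((PowerSeries.constantCoeff (R := ℂ))) = 0 := by
      ext k l
      rw [Matrix.map_apply, Matrix.zero_apply]
      have h1 := hcoeff 0 k l
      rw [zero_add] at h1
      have h2 : (g k l).coeff (lam nl) = x (lam nl) k l := (hx _ k l).symm
      rw [h2, hx0, Matrix.zero_apply] at h1
      have h3 : ((0 : ℕ) : ℤ) = (0 : ℤ) := by norm_num
      rw [← h3, HahnSeries.ofPowerSeries_apply_coeff] at h1
      rw [← PowerSeries.coeff_zero_eq_constantCoeff, ← h1]
    set A0 := Ap.map ((PowerSeries.constantCoeff (R := ℂ))) with hA0d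
    set B0 := Bp.map ((PowerSeries.constantCoeff (R := ℂ))) with hB0d
    set P : Matrix (Fin n) (Fin n) ℂ :=
      Matrix.diagonal (fun j => if c j = 0 then (1 : ℂ) else 0) with hP
    have hexp : h.map ((PowerSeries.constantCoeff (R := ℂ))) = A0 * P * B0 := by
      rw [hh, Matrix.map_mul, Matrix.map_mul, Matrix.diagonal_map (map_zero _)]
      have hfun : (fun j => ((PowerSeries.constantCoeff (R := ℂ))) ((PowerSeries.X : PowerSeries ℂ) ^ c j)) =
          (fun j => if c j = 0 then (1 : ℂ) else 0) := by
        funext j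
        rw [map_pow, PowerSeries.constantCoeff_X]
        by_cases hcj : c j = 0
        · rw [if_pos hcj, hcj, pow_zero]
        · rw [if_neg hcj, zero_pow hcj]
      rw [hfun]
    have hUA : IsUnit A0.det := by
      rw [hA0d, ← RingHom.mapMatrix_apply, ← RingHom.map_det, hdetAp, _root_.map_one]
      exact isUnit_one
    have hUB : IsUnit B0.det := by
      rw [hB0d, ← RingHom.mapMatrix_apply, ← RingHom.map_det, hdetBp, _root_.map_one]
      exact isUnit_one
    have h5 : P = A0⁻¹ * (A0 * P * B0) * B0⁻¹ := by
      rw [Matrix.mul_assoc A0 P B0, Matrix.nonsing_inv_mul_cancel_left _ _ hUA,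
        Matrix.mul_nonsing_inv_cancel_right _ _ hUB]
    rw [← hexp, hcc, Matrix.mul_zero, Matrix.zero_mul] at h5
    have h6 : P nl nl = 0 := by rw [h5]; rfl
    rw [hP, Matrix.diagonal_apply_eq] at h6
    have h7 : c nl = 0 := by simp only [hc]; omega
    rw [if_pos h7] at h6
    exact one_ne_zero h6
  have hNN : N = lam nl := le_antisymm hNle hNge
  -- identify the matrix with truncT s n h
  have hMeq : (Matrix.of fun p q : Fin s × Fin n =>
      if (p.1 : ℕ) ≤ (q.1 : ℕ) then x (N + ((q.1 : ℕ) - (p.1 : ℕ) : ℕ)) p.2 q.2 else 0)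
      = truncT s n h := by
    ext ⟨p, k⟩ ⟨q, l⟩
    rw [Matrix.of_apply, truncT_apply]
    by_cases hpq : (p : ℕ) ≤ (q : ℕ)
    · rw [if_pos hpq, if_pos hpq, hx]
      have h1 := hcoeff (((q : ℕ) - (p : ℕ) : ℕ) : ℤ) k l
      rw [hNN, add_comm (lam nl) _, h1, HahnSeries.ofPowerSeries_apply_coeff]
    · rw [if_neg hpq, if_neg hpq]
  rw [hMeq, hh, truncT_mul, truncT_mul]
  rw [Matrix.rank_mul_eq_left_of_isUnit_det _ _ (isUnit_truncT_det s n Bp hdetBp)]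
  rw [Matrix.rank_mul_eq_right_of_isUnit_det _ _ (isUnit_truncT_det s n Ap hdetAp)]
  rw [rank_truncT_diag]
  apply Finset.sum_congr rfl
  intro j _
  have := hge j
  simp only [hc]
  omega
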